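/- Let A ∈ ℝ^{n×n} be invertible, W ∈ ℝ^{n×n} symmetric positive definite, and let S_1, …, S_r with S_i ∈ ℝ^{n×q_i} each have full column rank, with probabilities p_i > 0, Σ_{i=1}^r p_i = 1. Fix X_0 ∈ ℝ^{n×n}; for each k ≥ 0 and each path s = (s_0, …, s_{k−1}) ∈ {1,…,r}^k, define X_k(s) recursively by X_{j+1}(s) = X_j(s) + W A^T S_{s_j} (S_{s_j}^T A W A^T S_{s_j})^{-1} S_{s_j}^T (I − A X_j(s)), starting from X_0(s) = X_0. Then with ρ := 1 − λ_min(W^{1/2} (Σ_{i=1}^r p_i Z_i) W^{1/2}), where Z_i := A^T S_i (S_i^T A W A^T S_i)^{-1} S_i^T A, the norm of the expected error satisfies ‖Σ_{s ∈ {1,…,r}^k} (Π_{j<k} p_{s_j}) (X_k(s) − A^{-1})‖_{W^{-1}} ≤ ρ^k ‖X_0 − A^{-1}‖_{W^{-1}}. -/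

import Mathlib

open Matrix BigOperators Pointwise

/-- `Z = Aᵀ S (Sᵀ A W Aᵀ S)⁻¹ Sᵀ A`. -/
noncomputable def Zmat {n q : ℕ} (A W : Matrix (Fin n) (Fin n) ℝ)
    (S : Matrix (Fin n) (Fin q) ℝ) : Matrix (Fin n) (Fin n) ℝ :=
  Aᵀ * S * (Sᵀ * A * W * Aᵀ * S)⁻¹ * Sᵀ * A

/-- One sketch-and-project step for the inverse equation `A X = I` (row variant). -/
noncomputable def rowStep {n q : ℕ} (A W : Matrix (Fin n) (Fin n) ℝ)
    (S : Matrix (Fin n) (Fin q) ℝ) (X : Matrix (Fin n) (Fin n) ℝ) :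
    Matrix (Fin n) (Fin n) ℝ :=
  X + W * Aᵀ * S * (Sᵀ * A * W * Aᵀ * S)⁻¹ * Sᵀ * (1 - A * X)

/-- The spectral (ℓ₂ operator) norm of a real square matrix. -/
noncomputable def specNorm {n : ℕ} (M : Matrix (Fin n) (Fin n) ℝ) : ℝ :=
  ‖Matrix.toEuclideanCLM (𝕜 := ℝ) M‖

/-- The positive semidefinite square root of a positive semidefinite matrix
(the definition of `Matrix.PosSemidef.sqrt` in the older Mathlib). -/
noncomputable def posSemidefSqrt {n : ℕ} {M : Matrix (Fin n) (Fin n) ℝ} (hM : M.PosSemidef) :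
    Matrix (Fin n) (Fin n) ℝ :=
  hM.1.eigenvectorUnitary.1 * diagonal ((↑) ∘ (√·) ∘ hM.1.eigenvalues) *
  (star hM.1.eigenvectorUnitary : Matrix (Fin n) (Fin n) ℝ)

section auxnorm
open scoped Matrix.Norms.L2Operator
variable {n : ℕ}

lemma specNorm_eq (M : Matrix (Fin n) (Fin n) ℝ) : specNorm M = ‖M‖ := rfl

lemma specNorm_mul_le (X Y : Matrix (Fin n) (Fin n) ℝ) :
    specNorm (X * Y) ≤ specNorm X * specNorm Y := by
  simp only [specNorm_eq]; exact norm_mul_le X Y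

lemma specNorm_nonneg (X : Matrix (Fin n) (Fin n) ℝ) : 0 ≤ specNorm X := norm_nonneg _

lemma specNorm_diagonal_le (d : Fin n → ℝ) {c : ℝ} (hc : 0 ≤ c) (h : ∀ i, |d i| ≤ c) :
    specNorm (diagonal d) ≤ c := by
  rw [specNorm_eq, Matrix.l2_opNorm_def]
  apply ContinuousLinearMap.opNorm_le_bound _ hc
  intro x
  rw [EuclideanSpace.norm_eq, EuclideanSpace.norm_eq, ← Real.sqrt_sq hc,
    ← Real.sqrt_mul (sq_nonneg c)]
  apply Real.sqrt_le_sqrt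
  rw [Finset.mul_sum]
  apply Finset.sum_le_sum
  intro i _
  have happ : ((toEuclideanLin.trans LinearMap.toContinuousLinearMap) (diagonal d)) x i
      = d i * x i := by
    simp [Matrix.toEuclideanLin_apply, Matrix.mulVec_diagonal]
  rw [happ]
  simp only [Real.norm_eq_abs, abs_mul, sq_abs]
  rw [mul_pow, ← sq_abs (x i)]
  exact mul_le_mul_of_nonneg_right (pow_le_pow_left₀ (abs_nonneg _) (h i) 2) (sq_nonneg _)

lemma specNorm_herm_le (hpos : 0 < n) {N : Matrix (Fin n) (Fin n) ℝ} (hN : N.IsHermitian)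
    {c : ℝ} (hc : 0 ≤ c) (h : ∀ i, |hN.eigenvalues i| ≤ c) : specNorm N ≤ c := by
  haveI : Nonempty (Fin n) := ⟨⟨0, hpos⟩⟩
  rw [specNorm_eq]
  conv_lhs => rw [hN.spectral_theorem, Unitary.conjStarAlgAut_apply]
  rw [mul_assoc, CStarRing.norm_coe_unitary_mul, ← Unitary.coe_star,
    CStarRing.norm_mul_coe_unitary]
  rw [← specNorm_eq]
  apply specNorm_diagonal_le _ hc
  intro i
  simpa using h i

end auxnorm

section algebra
variable {n : ℕ}

/-- rank = number of columns implies injectivity of `mulVec`. -/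
lemma mulVec_inj_of_rank {q : ℕ} {S : Matrix (Fin n) (Fin q) ℝ} (hS : S.rank = q)
    {x : Fin q → ℝ} (hx : S *ᵥ x = 0) : x = 0 := by
  have hk : LinearMap.ker S.mulVecLin = ⊥ := by
    have h1 := LinearMap.finrank_range_add_finrank_ker S.mulVecLin
    rw [show Module.finrank ℝ (LinearMap.range S.mulVecLin) = q from hS] at h1
    simp only [Module.finrank_fintype_fun_eq_card, Fintype.card_fin] at h1
    have h2 : Module.finrank ℝ (LinearMap.ker S.mulVecLin) = 0 := by omega
    exact Submodule.finrank_eq_zero.mp h2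
  have := LinearMap.ker_eq_bot.mp hk
  exact this (a₂ := 0) (by simpa using hx)

lemma Bmat_posDef {q : ℕ} {A W : Matrix (Fin n) (Fin n) ℝ} {S : Matrix (Fin n) (Fin q) ℝ}
    (hA : IsUnit A.det) (hW : W.PosDef) (hS : S.rank = q) :
    (Sᵀ * A * W * Aᵀ * S).PosDef := by
  have hrw : Sᵀ * A * W * Aᵀ * S = (Aᵀ * S)ᴴ * W * (Aᵀ * S) := by
    rw [conjTranspose_eq_transpose_of_trivial, transpose_mul, transpose_transpose]
    simp only [Matrix.mul_assoc]
  rw [hrw]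
  refine Matrix.PosDef.of_dotProduct_mulVec_pos ?_ ?_
  · exact Matrix.isHermitian_conjTranspose_mul_mul _ hW.isHermitian
  · intro x hx
    have hy : (Aᵀ * S) *ᵥ x ≠ 0 := by
      intro hy0
      apply hx
      apply mulVec_inj_of_rank hS
      have hAT : IsUnit Aᵀ.det := by rwa [Matrix.det_transpose]
      have h2 : Aᵀ⁻¹ *ᵥ ((Aᵀ * S) *ᵥ x) = S *ᵥ x := by
        rw [Matrix.mulVec_mulVec, ← Matrix.mul_assoc, Matrix.nonsing_inv_mul _ hAT,
          Matrix.one_mul]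
      rw [hy0, Matrix.mulVec_zero] at h2
      exact h2.symm
    have := hW.dotProduct_mulVec_pos hy
    simpa only [star_mulVec, dotProduct_mulVec, Matrix.vecMul_vecMul,
      Matrix.mul_assoc] using this

end algebra

section algebra2
variable {n : ℕ} {A W : Matrix (Fin n) (Fin n) ℝ}

lemma Zmat_mul_W_mul_Zmat {q : ℕ} {S : Matrix (Fin n) (Fin q) ℝ}
    (hB : IsUnit (Sᵀ * A * W * Aᵀ * S).det) :
    Zmat A W S * W * Zmat A W S = Zmat A W S := by
  simp only [Zmat]
  set B := Sᵀ * A * W * Aᵀ * S with hBdef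
  have hB1 : B⁻¹ * B = 1 := Matrix.nonsing_inv_mul _ hB
  have key : ∀ X : Matrix (Fin q) (Fin n) ℝ,
      Sᵀ * (A * (W * (Aᵀ * (S * X)))) = B * X := by
    intro X; rw [hBdef]; simp only [Matrix.mul_assoc]
  simp only [Matrix.mul_assoc]
  rw [key, ← Matrix.mul_assoc B⁻¹ B, hB1, Matrix.one_mul]

lemma Zmat_transpose {q : ℕ} {S : Matrix (Fin n) (Fin q) ℝ} (hW : Wᵀ = W) :
    (Zmat A W S)ᵀ = Zmat A W S := by
  have hBt : (Sᵀ * A * W * Aᵀ * S)ᵀ = Sᵀ * A * W * Aᵀ * S := by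
    simp only [Matrix.transpose_mul, Matrix.transpose_transpose, hW]
    simp only [Matrix.mul_assoc]
  simp only [Zmat, Matrix.transpose_mul, Matrix.transpose_transpose,
    Matrix.transpose_nonsing_inv, hBt]
  simp only [Matrix.mul_assoc]

lemma step_err (hA : IsUnit A.det) {q : ℕ} (S : Matrix (Fin n) (Fin q) ℝ)
    (X : Matrix (Fin n) (Fin n) ℝ) :
    rowStep A W S X - A⁻¹ = (1 - W * Zmat A W S) * (X - A⁻¹) := by
  have h : A * A⁻¹ = 1 := Matrix.mul_nonsing_inv _ hA
  have kk : ∀ C : Matrix (Fin n) (Fin n) ℝ,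
      X + C * (1 - A * X) - A⁻¹ = (1 - C * A) * (X - A⁻¹) := by
    intro C
    have h2 : (1 - C * A) * (X - A⁻¹) = X - A⁻¹ - C * (A * X) + C * (A * A⁻¹) := by
      noncomm_ring
    rw [h2, h]
    noncomm_ring
  have := kk (W * Aᵀ * S * (Sᵀ * A * W * Aᵀ * S)⁻¹ * Sᵀ)
  rw [rowStep, this, Zmat]
  congr 1
  simp only [Matrix.mul_assoc]

end algebra2

section pathsum
variable {n r : ℕ}

lemma fold_err {A W : Matrix (Fin n) (Fin n) ℝ} (hA : IsUnit A.det)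
    {q : Fin r → ℕ} (S : ∀ i, Matrix (Fin n) (Fin (q i)) ℝ)
    (l : List (Fin r)) (X : Matrix (Fin n) (Fin n) ℝ) :
    l.foldl (fun X i => rowStep A W (S i) X) X - A⁻¹ =
      ((l.map (fun i => 1 - W * Zmat A W (S i))).reverse.prod) * (X - A⁻¹) := by
  induction l generalizing X with
  | nil => simp
  | cons a l ih =>
    rw [List.foldl_cons, ih, List.map_cons, List.reverse_cons, List.prod_append,
      List.prod_singleton, Matrix.mul_assoc, ← step_err hA]

lemma sum_paths (k : ℕ) (T : Fin r → Matrix (Fin n) (Fin n) ℝ) (p : Fin r → ℝ) :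
    ∑ s : Fin k → Fin r, (∏ j, p (s j)) •
        ((List.ofFn s).map T).reverse.prod
      = (∑ i, p i • T i) ^ k := by
  induction k with
  | zero =>
    simp
  | succ k ih =>
    rw [← ((Fin.consEquiv (fun _ : Fin (k + 1) => Fin r)).sum_comp
      (fun s => (∏ j, p (s j)) • ((List.ofFn s).map T).reverse.prod))]
    rw [Fintype.sum_prod_type]
    have hterm : ∀ (i : Fin r) (t : Fin k → Fin r),
        (∏ j, p ((Fin.consEquiv (fun _ : Fin (k + 1) => Fin r)) (i, t) j)) •
          ((List.ofFn ((Fin.consEquiv (fun _ : Fin (k + 1) => Fin r)) (i, t))).map T).reverse.prod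
        = ((∏ j, p (t j)) • ((List.ofFn t).map T).reverse.prod) * (p i • T i) := by
      intro i t
      have hs : ((Fin.consEquiv (fun _ : Fin (k + 1) => Fin r)) (i, t)) =
          Fin.cons (α := fun _ => Fin r) i t := by
        ext j
        simp [Fin.consEquiv]
      rw [hs]
      have hl : List.ofFn (Fin.cons (α := fun _ => Fin r) i t) = i :: List.ofFn t := by
        rw [List.ofFn_succ]
        simp only [Fin.cons_zero, Fin.cons_succ]
      rw [hl, List.map_cons, List.reverse_cons, List.prod_append, List.prod_singleton,
        Fin.prod_univ_succ, Fin.cons_zero]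
      simp only [Fin.cons_succ]
      rw [mul_comm (p i), mul_smul, ← Matrix.mul_smul, ← smul_mul_assoc]
    simp only [hterm]
    simp only [← Finset.sum_mul]
    rw [ih, ← Finset.mul_sum, pow_succ]

end pathsum

section conj
variable {n : ℕ}

lemma matConjPow (U V Bm E : Matrix (Fin n) (Fin n) ℝ) (hUV : U * V = 1) (hVU : V * U = 1)
    (k : ℕ) : U * (Bm ^ k * E) * U = (U * Bm * V) ^ k * (U * E * U) := by
  induction k with
  | zero => simp [Matrix.one_mul]
  | succ k ih =>
    rw [pow_succ', pow_succ']
    have h1 : U * (Bm * Bm ^ k * E) * U = (U * Bm * V) * (U * (Bm ^ k * E) * U) := by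
      simp only [Matrix.mul_assoc]
      rw [← Matrix.mul_assoc V U, hVU, Matrix.one_mul]
    rw [h1, ih, ← Matrix.mul_assoc]

lemma posSemidef_smul {c : ℝ} {M : Matrix (Fin n) (Fin n) ℝ} (hM : M.PosSemidef)
    (hc : 0 ≤ c) : (c • M).PosSemidef := by
  refine Matrix.PosSemidef.of_dotProduct_mulVec_nonneg ?_ ?_
  · show (c • M)ᴴ = c • M
    rw [Matrix.conjTranspose_smul, star_trivial, hM.1]
  · intro x
    rw [Matrix.smul_mulVec, dotProduct_smul]
    exact mul_nonneg hc (hM.dotProduct_mulVec_nonneg x)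

lemma posSemidef_sum {r : ℕ} (f : Fin r → Matrix (Fin n) (Fin n) ℝ)
    (h : ∀ i, (f i).PosSemidef) : (∑ i, f i).PosSemidef := by
  classical
  refine Finset.sum_induction f _ (fun a b ha hb => ha.add hb) Matrix.PosSemidef.zero
    (fun i _ => h i)

end conj

theorem stmt9 {n r : ℕ} (hn : 0 < n) (A W : Matrix (Fin n) (Fin n) ℝ)
    (q : Fin r → ℕ) (S : ∀ i, Matrix (Fin n) (Fin (q i)) ℝ)
    (hA : IsUnit A.det) (hW : W.PosDef) (hS : ∀ i, (S i).rank = q i)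
    (p : Fin r → ℝ) (hp : ∀ i, 0 < p i) (hsum : ∑ i, p i = 1)
    (X0 : Matrix (Fin n) (Fin n) ℝ) (k : ℕ)
    (hM : (posSemidefSqrt hW.posSemidef * (∑ i, p i • Zmat A W (S i)) *
      posSemidefSqrt hW.posSemidef).IsHermitian) :
    specNorm ((posSemidefSqrt hW.posSemidef)⁻¹ *
        (∑ s : Fin k → Fin r, (∏ j, p (s j)) •
          ((List.ofFn s).foldl (fun X i => rowStep A W (S i) X) X0 - A⁻¹)) *
        (posSemidefSqrt hW.posSemidef)⁻¹) ≤
      (1 - ⨅ j, hM.eigenvalues j) ^ k *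
        specNorm ((posSemidefSqrt hW.posSemidef)⁻¹ * (X0 - A⁻¹) * (posSemidefSqrt hW.posSemidef)⁻¹) := by
  classical
  set sq := posSemidefSqrt hW.posSemidef with hsqdef
  set Zb : Matrix (Fin n) (Fin n) ℝ := ∑ i, p i • Zmat A W (S i) with hZbdef
  set E0 := X0 - A⁻¹ with hE0def
  have hsq2 : sq * sq = W := by
    have hU : (star hW.posSemidef.1.eigenvectorUnitary : Matrix (Fin n) (Fin n) ℝ) *
        hW.posSemidef.1.eigenvectorUnitary.1 = 1 := Unitary.coe_star_mul_self _
    have hD : diagonal (((↑) ∘ (√·) ∘ hW.posSemidef.1.eigenvalues : Fin n → ℝ)) *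
        diagonal ((↑) ∘ (√·) ∘ hW.posSemidef.1.eigenvalues) =
        diagonal (RCLike.ofReal ∘ hW.posSemidef.1.eigenvalues) := by
      rw [diagonal_mul_diagonal]; congr 1; funext i
      simp [Real.mul_self_sqrt (hW.posSemidef.eigenvalues_nonneg i)]
    rw [hsqdef, posSemidefSqrt]
    simp only [Matrix.mul_assoc]
    rw [← Matrix.mul_assoc _ hW.posSemidef.1.eigenvectorUnitary.1, hU, Matrix.one_mul,
      ← Matrix.mul_assoc (diagonal _) (diagonal _), hD]
    conv_rhs => rw [hW.posSemidef.1.spectral_theorem, Unitary.conjStarAlgAut_apply, Matrix.mul_assoc]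
  have hsqH : sqᴴ = sq := by
    rw [hsqdef, posSemidefSqrt, conjTranspose_mul, conjTranspose_mul, diagonal_conjTranspose,
      Matrix.mul_assoc]
    simp
    simp only [Matrix.star_eq_conjTranspose, Matrix.conjTranspose_eq_transpose_of_trivial,
      Matrix.transpose_transpose]
  have hdetW : W.det ≠ 0 := hW.det_pos.ne'
  have hsqdet : IsUnit sq.det := by
    have h2 : sq.det * sq.det = W.det := by rw [← Matrix.det_mul, hsq2]
    refine isUnit_iff_ne_zero.mpr fun h0 => hdetW ?_
    rw [← h2, h0, zero_mul]
  have hsq1 : sq⁻¹ * sq = 1 := Matrix.nonsing_inv_mul _ hsqdet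
  have hsq1' : sq * sq⁻¹ = 1 := Matrix.mul_nonsing_inv _ hsqdet
  have hsqW : sq⁻¹ * W = sq := by rw [← hsq2, ← Matrix.mul_assoc, hsq1, Matrix.one_mul]
  have hWt : Wᵀ = W := by
    have h := hW.isHermitian
    rwa [← Matrix.conjTranspose_eq_transpose_of_trivial]
  have hBu : ∀ i, IsUnit ((S i)ᵀ * A * W * Aᵀ * (S i)).det := fun i =>
    isUnit_iff_ne_zero.mpr (Bmat_posDef hA hW (hS i)).det_pos.ne'
  -- Step 1: the expected error is a matrix power applied to the initial error.
  have eq1 : (∑ s : Fin k → Fin r, (∏ j, p (s j)) •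
      ((List.ofFn s).foldl (fun X i => rowStep A W (S i) X) X0 - A⁻¹))
      = (1 - W * Zb) ^ k * E0 := by
    calc (∑ s : Fin k → Fin r, (∏ j, p (s j)) •
        ((List.ofFn s).foldl (fun X i => rowStep A W (S i) X) X0 - A⁻¹))
        = ∑ s : Fin k → Fin r, (∏ j, p (s j)) •
            ((((List.ofFn s).map (fun i => 1 - W * Zmat A W (S i))).reverse.prod) * E0) := by
          refine Finset.sum_congr rfl fun s _ => ?_
          rw [fold_err hA S]
      _ = (∑ s : Fin k → Fin r, (∏ j, p (s j)) •
            (((List.ofFn s).map (fun i => 1 - W * Zmat A W (S i))).reverse.prod)) * E0 := by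
          simp only [← smul_mul_assoc, ← Finset.sum_mul]
      _ = (∑ i, p i • (1 - W * Zmat A W (S i))) ^ k * E0 := by rw [sum_paths]
      _ = (1 - W * Zb) ^ k * E0 := by
          congr 2
          rw [hZbdef, Finset.mul_sum]
          simp only [smul_sub, Matrix.mul_smul]
          rw [Finset.sum_sub_distrib, ← Finset.sum_smul, hsum, one_smul]
  have eq2 : sq⁻¹ * ((1 - W * Zb) ^ k * E0) * sq⁻¹
      = (1 - sq * Zb * sq) ^ k * (sq⁻¹ * E0 * sq⁻¹) := by
    rw [matConjPow sq⁻¹ sq (1 - W * Zb) E0 hsq1 hsq1' k]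
    have h3 : sq⁻¹ * (1 - W * Zb) * sq = sq⁻¹ * sq - sq⁻¹ * W * Zb * sq := by noncomm_ring
    rw [h3, hsq1, hsqW]
  -- Positive semidefiniteness of 1 - M.
  have hNps : (1 - sq * Zb * sq).PosSemidef := by
    have hsub : 1 - sq * Zb * sq = ∑ i, p i • (1 - sq * Zmat A W (S i) * sq) := by
      simp only [smul_sub]
      rw [Finset.sum_sub_distrib, ← Finset.sum_smul, hsum, one_smul, hZbdef,
        Finset.mul_sum, Finset.sum_mul]
      simp only [Matrix.mul_smul, Matrix.smul_mul]
    rw [hsub]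
    apply _root_.posSemidef_sum
    intro i
    apply posSemidef_smul _ (hp i).le
    set P := sq * Zmat A W (S i) * sq with hPdef
    have hZt : (Zmat A W (S i))ᵀ = Zmat A W (S i) := Zmat_transpose hWt
    have hPH : (1 - P)ᴴ = 1 - P := by
      rw [Matrix.conjTranspose_sub, Matrix.conjTranspose_one, hPdef]
      simp only [Matrix.conjTranspose_mul, hsqH]
      rw [Matrix.conjTranspose_eq_transpose_of_trivial, hZt]
      rw [Matrix.mul_assoc]
    have hPP : P * P = P := by
      rw [hPdef]
      simp only [Matrix.mul_assoc]
      have h5 : sq * (sq * (Zmat A W (S i) * sq)) = W * (Zmat A W (S i) * sq) := by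
        rw [← Matrix.mul_assoc, hsq2]
      rw [h5]
      have h6 : Zmat A W (S i) * (W * (Zmat A W (S i) * sq)) = Zmat A W (S i) * sq := by
        calc Zmat A W (S i) * (W * (Zmat A W (S i) * sq))
            = (Zmat A W (S i) * W * Zmat A W (S i)) * sq := by simp only [Matrix.mul_assoc]
          _ = Zmat A W (S i) * sq := by rw [Zmat_mul_W_mul_Zmat (hBu i)]
      rw [h6]
    have hid : (1 - P) * (1 - P) = 1 - P := by
      rw [Matrix.sub_mul, Matrix.one_mul, Matrix.mul_sub, Matrix.mul_one, hPP]
      abel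
    have h7 : 1 - P = (1 - P)ᴴ * (1 - P) := by rw [hPH, hid]
    rw [h7]
    exact Matrix.posSemidef_conjTranspose_mul_self _
  have hNh : (1 - sq * Zb * sq).IsHermitian := hNps.1
  -- Spectrum facts.
  have hspecN : spectrum ℝ (1 - sq * Zb * sq) = Set.range hNh.eigenvalues :=
    hNh.spectrum_real_eq_range_eigenvalues
  have hspecM : spectrum ℝ (sq * Zb * sq) = Set.range hM.eigenvalues :=
    hM.spectrum_real_eq_range_eigenvalues
  have hsub1 : ({1} : Set ℝ) - spectrum ℝ (sq * Zb * sq) = spectrum ℝ (1 - sq * Zb * sq) := by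
    have h := spectrum.singleton_sub_eq (sq * Zb * sq) (1:ℝ)
    rwa [_root_.map_one] at h
  have hsub2 : ({1} : Set ℝ) - spectrum ℝ (1 - sq * Zb * sq) = spectrum ℝ (sq * Zb * sq) := by
    have h := spectrum.singleton_sub_eq (1 - sq * Zb * sq) (1:ℝ)
    rwa [_root_.map_one, sub_sub_cancel] at h
  set lam := ⨅ j, hM.eigenvalues j with hlamdef
  have hbdd : BddBelow (Set.range hM.eigenvalues) := Set.Finite.bddBelow (Set.finite_range _)
  have hlam_le : ∀ j, lam ≤ hM.eigenvalues j := fun j => ciInf_le hbdd j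
  have hNnonneg : ∀ μ ∈ spectrum ℝ (1 - sq * Zb * sq), 0 ≤ μ := by
    intro μ hμ
    rw [hspecN] at hμ
    obtain ⟨i, rfl⟩ := hμ
    exact hNps.eigenvalues_nonneg i
  have hMle1 : ∀ ν ∈ spectrum ℝ (sq * Zb * sq), ν ≤ 1 := by
    intro ν hν
    rw [← hsub2] at hν
    obtain ⟨x, hx, y, hy, hxy⟩ := hν
    rw [Set.mem_singleton_iff] at hx
    have hxy' : x - y = ν := hxy
    have := hNnonneg y hy
    rw [← hxy', hx]
    linarith
  have hrho0 : 0 ≤ 1 - lam := by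
    have h1 : hM.eigenvalues ⟨0, hn⟩ ≤ 1 := by
      apply hMle1
      rw [hspecM]
      exact ⟨⟨0, hn⟩, rfl⟩
    have := hlam_le ⟨0, hn⟩
    linarith
  have hNle : ∀ i, |hNh.eigenvalues i| ≤ 1 - lam := by
    intro i
    have hmem : hNh.eigenvalues i ∈ spectrum ℝ (1 - sq * Zb * sq) := by
      rw [hspecN]; exact ⟨i, rfl⟩
    have h0 : 0 ≤ hNh.eigenvalues i := hNnonneg _ hmem
    have hle : hNh.eigenvalues i ≤ 1 - lam := by
      rw [← hsub1] at hmem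
      obtain ⟨x, hx, y, hy, hxy⟩ := hmem
      rw [Set.mem_singleton_iff] at hx
      rw [hspecM] at hy
      obtain ⟨j, rfl⟩ := hy
      have hxy' : x - hM.eigenvalues j = hNh.eigenvalues i := hxy
      have := hlam_le j
      rw [← hxy', hx]
      linarith
    rw [abs_le]
    constructor <;> linarith
  have hnorm1 : specNorm (1 - sq * Zb * sq) ≤ 1 - lam := specNorm_herm_le hn hNh hrho0 hNle
  rw [eq1, eq2]
  have main : ∀ m : ℕ, specNorm ((1 - sq * Zb * sq) ^ m * (sq⁻¹ * E0 * sq⁻¹))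
      ≤ (1 - lam) ^ m * specNorm (sq⁻¹ * E0 * sq⁻¹) := by
    intro m
    induction m with
    | zero => simp [pow_zero, Matrix.one_mul]
    | succ m ih =>
      rw [pow_succ', Matrix.mul_assoc]
      calc specNorm ((1 - sq * Zb * sq) * ((1 - sq * Zb * sq) ^ m * (sq⁻¹ * E0 * sq⁻¹)))
          ≤ specNorm (1 - sq * Zb * sq) *
            specNorm ((1 - sq * Zb * sq) ^ m * (sq⁻¹ * E0 * sq⁻¹)) := specNorm_mul_le _ _
        _ ≤ (1 - lam) * ((1 - lam) ^ m * specNorm (sq⁻¹ * E0 * sq⁻¹)) :=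
            mul_le_mul hnorm1 ih (specNorm_nonneg _) hrho0
        _ = (1 - lam) ^ (m + 1) * specNorm (sq⁻¹ * E0 * sq⁻¹) := by ring
  exact main k
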